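/- Let δ be distributed according to a K-mode Gaussian mixture with modes N(μ_k, Σ_k), Σ_k ≻ 0, and weights π_k. Fix x̃ with x̃ᵀΣ_kx̃ > 0 for all k, and risk levels ε_k ∈ (0, 1/2) with Σ_k π_k ε_k = ε. If Ψ⁻¹(1−ε_k)·√(x̃ᵀΣ_kx̃) + μ_kᵀx̃ ≤ 0 for all k, then P_{δ~p_*}(δᵀx̃ ≤ 0) ≥ 1 − ε. -/

import Mathlib

open MeasureTheory ProbabilityTheory Matrix

/-- CDF of the standard normal distribution. -/
noncomputable def stdCDF (t : ℝ) : ℝ := cdf (gaussianReal 0 1) t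

/-- Quantile (inverse CDF) of the standard normal distribution. -/
noncomputable def stdQuantile (p : ℝ) : ℝ := sInf {t : ℝ | p ≤ stdCDF t}

/-- Density of the standard normal distribution. -/
noncomputable def stdPDF (t : ℝ) : ℝ := Real.exp (-t ^ 2 / 2) / Real.sqrt (2 * Real.pi)

/-- Conditional Value-at-Risk at level ε (Rockafellar–Uryasev form). -/
noncomputable def cvar {Ω : Type*} [MeasurableSpace Ω] (P : Measure Ω) (Z : Ω → ℝ)
    (ε : ℝ) : ℝ := ⨅ α : ℝ, (ε⁻¹ * ∫ ω, max (Z ω + α) 0 ∂P - α)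


lemma quantile_le (p : ℝ) (hp0 : 0 < p) (hp1 : p < 1) : p ≤ stdCDF (stdQuantile p) := by
  set Sq : Set ℝ := {t : ℝ | p ≤ stdCDF t} with hSq
  have hne : Sq.Nonempty := by
    obtain ⟨t, ht⟩ := ((tendsto_cdf_atTop (μ := gaussianReal 0 1)).eventually
      (eventually_ge_nhds hp1)).exists
    exact ⟨t, ht⟩
  have hbdd : BddBelow Sq := by
    obtain ⟨b, hb⟩ := Filter.eventually_atBot.mp
      ((tendsto_cdf_atBot (μ := gaussianReal 0 1)).eventually (eventually_lt_nhds hp0))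
    refine ⟨b, fun s hs => ?_⟩
    by_contra hlt
    exact absurd hs (not_le.mpr (hb s (le_of_not_ge hlt)))
  have hrc : ContinuousWithinAt stdCDF (Set.Ici (sInf Sq)) (sInf Sq) :=
    (cdf (gaussianReal 0 1)).right_continuous _
  have h2 : Filter.Tendsto stdCDF (nhdsWithin (sInf Sq) (Set.Ioi (sInf Sq)))
      (nhds (stdCDF (sInf Sq))) :=
    hrc.mono_left (nhdsWithin_mono _ Set.Ioi_subset_Ici_self)
  have hev : ∀ t ∈ Set.Ioi (sInf Sq), p ≤ stdCDF t := by
    intro t ht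
    obtain ⟨s, hs, hst⟩ := (csInf_lt_iff hbdd hne).mp ht
    exact hs.trans (monotone_cdf _ hst.le)
  have hfin := ge_of_tendsto h2 (eventually_nhdsWithin_of_forall hev)
  rw [stdQuantile]
  exact hfin

lemma gauss_Iic_ge (m s : ℝ) (hs : 0 < s) (ε : ℝ) (hε0 : 0 < ε) (hε1 : ε < 1)
    (hq : stdQuantile (1 - ε) * Real.sqrt s + m ≤ 0) :
    ((gaussianReal m ⟨s, hs.le⟩) (Set.Iic 0)).toReal ≥ 1 - ε := by
  set σ := Real.sqrt s with hσdef
  have hσ : 0 < σ := Real.sqrt_pos.mpr hs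
  have hveq : (⟨σ ^ 2, sq_nonneg _⟩ : NNReal) * 1 = (⟨s, hs.le⟩ : NNReal) := by
    ext; simp [hσdef, Real.sq_sqrt hs.le]
  have hmap : gaussianReal m ⟨s, hs.le⟩
      = ((gaussianReal 0 1).map (· * σ)).map (· + m) := by
    rw [gaussianReal_map_mul_const, gaussianReal_map_add_const]
    congr 1
    · ring
    · exact hveq.symm
  have hmeas1 : Measurable fun t : ℝ => t * σ := measurable_mul_const σ
  have hmeas2 : Measurable fun t : ℝ => t + m := measurable_add_const m
  rw [hmap, Measure.map_apply hmeas2 measurableSet_Iic,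
    Measure.map_apply hmeas1 (hmeas2 measurableSet_Iic)]
  have hset : (fun t : ℝ => t * σ) ⁻¹' ((· + m) ⁻¹' Set.Iic 0) = Set.Iic (-m / σ) := by
    ext t
    simp only [Set.mem_preimage, Set.mem_Iic]
    rw [le_div_iff₀ hσ]
    constructor <;> intro h <;> linarith
  rw [hset]
  have := (cdf_eq_real (μ := gaussianReal 0 1) (-m / σ)).trans (measureReal_def _ _)
  rw [← this]
  have hql : stdQuantile (1 - ε) ≤ -m / σ := by
    rw [le_div_iff₀ hσ]
    linarith
  have h1 : (1 : ℝ) - ε ≤ stdCDF (stdQuantile (1 - ε)) :=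
    quantile_le _ (by linarith) (by linarith)
  exact h1.trans (monotone_cdf _ hql)

/-- Second-order-cone constraints for each Gaussian mode imply the mixture chance
constraint. -/
theorem gmm_soc_implies_chance {n K : ℕ} (p : Fin K → Measure (Fin n → ℝ))
    [∀ k, IsProbabilityMeasure (p k)] (P : Measure (Fin n → ℝ)) [IsProbabilityMeasure P]
    (π : Fin K → ℝ) (hπ : ∀ k, 0 ≤ π k) (hsum : ∑ k, π k = 1)
    (hmix : ∀ A : Set (Fin n → ℝ), MeasurableSet A →
      (P A).toReal = ∑ k, π k * ((p k) A).toReal)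
    (μv : Fin K → Fin n → ℝ) (S : Fin K → Matrix (Fin n) (Fin n) ℝ)
    (hS : ∀ k, (S k).PosDef) (x : Fin n → ℝ)
    (hvar : ∀ k, 0 < x ⬝ᵥ (S k).mulVec x)
    (hlaw : ∀ k, Measure.map (fun v => v ⬝ᵥ x) (p k)
      = gaussianReal (μv k ⬝ᵥ x) ⟨x ⬝ᵥ (S k).mulVec x, (hvar k).le⟩)
    (ε : Fin K → ℝ) (hεk : ∀ k, 0 < ε k ∧ ε k < 1 / 2)
    (εt : ℝ) (hεt : ∑ k, π k * ε k = εt)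
    (hsoc : ∀ k, stdQuantile (1 - ε k) * Real.sqrt (x ⬝ᵥ (S k).mulVec x)
      + μv k ⬝ᵥ x ≤ 0) :
    (P {v | v ⬝ᵥ x ≤ 0}).toReal ≥ 1 - εt := by
  have hm : Measurable fun v : Fin n → ℝ => v ⬝ᵥ x := by
    simp only [dotProduct]
    exact Finset.measurable_sum _ fun i _ => (measurable_pi_apply i).mul_const _
  have hAeq : {v : Fin n → ℝ | v ⬝ᵥ x ≤ 0} = (fun v => v ⬝ᵥ x) ⁻¹' Set.Iic 0 := rfl
  have hA : MeasurableSet {v : Fin n → ℝ | v ⬝ᵥ x ≤ 0} := by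
    rw [hAeq]; exact hm measurableSet_Iic
  have hk : ∀ k, ((p k) {v : Fin n → ℝ | v ⬝ᵥ x ≤ 0}).toReal ≥ 1 - ε k := by
    intro k
    have : (p k) {v : Fin n → ℝ | v ⬝ᵥ x ≤ 0}
        = (Measure.map (fun v => v ⬝ᵥ x) (p k)) (Set.Iic 0) := by
      rw [Measure.map_apply hm measurableSet_Iic, hAeq]
    rw [this, hlaw k]
    exact gauss_Iic_ge _ _ (hvar k) _ (hεk k).1 (by linarith [(hεk k).2]) (hsoc k)
  rw [hmix _ hA, ← hεt]
  have h1 : ∑ k, π k * (1 - ε k) ≤ ∑ k, π k * ((p k) {v : Fin n → ℝ | v ⬝ᵥ x ≤ 0}).toReal :=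
    Finset.sum_le_sum fun k _ => mul_le_mul_of_nonneg_left (hk k) (hπ k)
  have h2 : ∑ k, π k * (1 - ε k) = 1 - ∑ k, π k * ε k := by
    simp_rw [mul_sub, Finset.sum_sub_distrib, mul_one, hsum]
  linarith
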